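/- Let P be a partition of the vertex set of a finite connected multigraph G into k ≥ 2 parts, and suppose G contains |E(G/P)| edge-disjoint spanning trees after each edge is duplicated k−1 times (as guaranteed by Nash-Williams–Tutte when P is an optimal partition). Then assigning each such tree weight 1/(k−1) yields a fractional tree packing of G of total value |E(G/P)|/(k−1) in which every edge has relative load at most 1. Consequently max_T pack_val(T) ≥ min_P part_val(P), and combined with weak duality, max_T pack_val(T) = min_P part_val(P). -/

import Mathlib

open Finset MeasureTheory ProbabilityTheory
open scoped Classical

variable {V E : Type*}

/-- Edge `e` joins `a` and `b` (in either direction). -/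
def touches (ends : E → V × V) (e : E) (a b : V) : Prop :=
  ends e = (a, b) ∨ ends e = (b, a)

/-- `a` and `b` are connected using edges from `F`. -/
def EdgeConn (ends : E → V × V) (F : Set E) (a b : V) : Prop :=
  Relation.ReflTransGen (fun x y => ∃ e ∈ F, touches ends e x y) a b

/-- The multigraph is connected. -/
def GConn [Fintype V] (ends : E → V × V) : Prop :=
  ∀ a b : V, EdgeConn ends Set.univ a b

/-- `T` is a spanning tree: it connects all vertices and has `|V| - 1` edges. -/
def IsSpanningTree [Fintype V] (ends : E → V × V) (T : Finset E) : Prop :=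
  (∀ a b : V, EdgeConn ends (↑T) a b) ∧ T.card = Fintype.card V - 1

/-- Relative load of edge `e` w.r.t. a multiset of (spanning trees given as edge sets). -/
noncomputable def relLoad (𝒯 : Multiset (Finset E)) (e : E) : ℝ :=
  (𝒯.countP (fun T => e ∈ T) : ℝ) / (Multiset.card 𝒯 : ℝ)

/-- Maximum relative load over all edges. -/
noncomputable def maxLoad [Fintype E] [Nonempty E] (𝒯 : Multiset (Finset E)) : ℝ :=
  Finset.univ.sup' Finset.univ_nonempty (relLoad 𝒯)

/-- Packing value of a tree packing. -/
noncomputable def packVal [Fintype E] [Nonempty E] (𝒯 : Multiset (Finset E)) : ℝ :=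
  1 / maxLoad 𝒯

/-- `P` is a partition of the vertex set into nonempty parts. -/
def IsPartition [Fintype V] (P : Finset (Finset V)) : Prop :=
  (∀ S ∈ P, S.Nonempty) ∧ ∀ v : V, ∃! S, S ∈ P ∧ v ∈ S

/-- Edge `e` crosses between distinct parts of the partition `P`. -/
def crossesP (ends : E → V × V) (P : Finset (Finset V)) (e : E) : Prop :=
  ∀ S ∈ P, ¬((ends e).1 ∈ S ∧ (ends e).2 ∈ S)

/-- Edges of `G/P`, i.e. edges crossing between distinct parts of `P`. -/
noncomputable def crossEdgesP [Fintype E] (ends : E → V × V) (P : Finset (Finset V)) : Finset E :=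
  Finset.univ.filter (crossesP ends P)

/-- Partition value `|E(G/P)| / (|P| - 1)`. -/
noncomputable def partVal [Fintype V] [Fintype E] (ends : E → V × V) (P : Finset (Finset V)) : ℝ :=
  ((crossEdgesP ends P).card : ℝ) / ((P.card : ℝ) - 1)

/-- Edge `e` crosses the cut `(S, V \ S)`. -/
def crossesC (ends : E → V × V) (S : Finset V) (e : E) : Prop :=
  ((ends e).1 ∈ S) ≠ ((ends e).2 ∈ S)

/-- The edges crossing the cut `(S, V \ S)`. -/
noncomputable def cutEdges [Fintype V] [Fintype E] (ends : E → V × V) (S : Finset V) : Finset E :=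
  Finset.univ.filter (crossesC ends S)

/-- Weight of the cut `(S, V \ S)` (number of crossing edges). -/
noncomputable def cutW [Fintype V] [Fintype E] (ends : E → V × V) (S : Finset V) : ℕ :=
  (cutEdges ends S).card

/-- `lam` is the minimum cut value of the multigraph. -/
def IsMinCutVal [Fintype V] [Fintype E] (ends : E → V × V) (lam : ℕ) : Prop :=
  (∃ S : Finset V, S.Nonempty ∧ S ≠ Finset.univ ∧ cutW ends S = lam) ∧
    ∀ S : Finset V, S.Nonempty → S ≠ Finset.univ → lam ≤ cutW ends S

/-- A rooted spanning tree given by a parent map: the root is a fixed point, every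
vertex reaches the root by iterating `parent`, and every tree edge exists in `G`. -/
def IsRootedSpanningTree [Fintype V] (ends : E → V × V) (parent : V → V) (r : V) : Prop :=
  parent r = r ∧ (∀ v : V, ∃ k : ℕ, parent^[k] v = r) ∧
    ∀ v : V, v ≠ r → ∃ e : E, touches ends e v (parent v)

/-- The set `v↓` of descendants of `v` (including `v`). -/
noncomputable def desc [Fintype V] (parent : V → V) (v : V) : Finset V :=
  Finset.univ.filter (fun u => ∃ k : ℕ, parent^[k] u = v)

/-- Degree of `u` in the multigraph (loops count twice). -/
noncomputable def deg [Fintype E] (ends : E → V × V) (u : V) : ℕ :=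
  (Finset.univ.filter (fun e : E => (ends e).1 = u)).card +
  (Finset.univ.filter (fun e : E => (ends e).2 = u)).card

/-- `x` is the value of some fractional tree packing of the multigraph. -/
def IsFracPackingVal [Fintype V] [Fintype E] (ends : E → V × V) (x : ℝ) : Prop :=
  ∃ (m : ℕ) (S : Fin m → Finset E) (w : Fin m → ℝ),
    (∀ j, IsSpanningTree ends (S j)) ∧ (∀ j, 0 ≤ w j) ∧
    (∀ e : E, ∑ j ∈ Finset.univ.filter (fun j => e ∈ S j), w j ≤ 1) ∧
    x = ∑ j, w j

set_option linter.unusedSectionVars false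

section Count

variable {Q : Type*} (ends : E → V × V) (π : V → Q) (C : Finset E)

def stepQ (x y : Q) : Prop :=
  ∃ e ∈ C, (π (ends e).1 = x ∧ π (ends e).2 = y) ∨ (π (ends e).1 = y ∧ π (ends e).2 = x)

def RQ : Q → Q → Prop := Relation.ReflTransGen (stepQ ends π C)

lemma RQ_symm : Symmetric (RQ ends π C) := by
  refine fun x y h => @Std.Symm.symm _ _ (@Relation.ReflTransGen.symmetric _ _ ⟨?_⟩) x y h
  rintro x y ⟨e, he, h⟩
  exact ⟨e, he, h.symm⟩

lemma RQ_trans {x y z : Q} (h1 : RQ ends π C x y) (h2 : RQ ends π C y z) : RQ ends π C x z :=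
  h1.trans h2

variable [Fintype Q]

noncomputable def classQ (q : Q) : Finset Q :=
  Finset.univ.filter (fun x => RQ ends π C q x)

lemma mem_classQ {q x : Q} : x ∈ classQ ends π C q ↔ RQ ends π C q x := by
  simp [classQ]

lemma classQ_eq_of {q q' : Q} (h : RQ ends π C q q') :
    classQ ends π C q = classQ ends π C q' := by
  ext x
  simp only [mem_classQ]
  exact ⟨fun hx => (RQ_symm ends π C h).trans hx, fun hx => h.trans hx⟩

lemma classQ_eq_iff {q q' : Q} :
    classQ ends π C q = classQ ends π C q' ↔ RQ ends π C q q' := by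
  constructor
  · intro h
    have h2 : q' ∈ classQ ends π C q' := (mem_classQ ends π C).mpr Relation.ReflTransGen.refl
    rw [← h] at h2
    exact (mem_classQ ends π C).mp h2
  · exact classQ_eq_of ends π C

noncomputable def nClasses : ℕ := (Finset.univ.image (classQ ends π C)).card

lemma nClasses_empty : nClasses ends π (∅ : Finset E) = Fintype.card Q := by
  have h : ∀ q : Q, classQ ends π (∅ : Finset E) q = {q} := by
    intro q
    ext x
    simp only [mem_classQ, Finset.mem_singleton]
    constructor
    · intro h
      induction h with
      | refl => rfl
      | tail _ hst ih => rcases hst with ⟨e, he, _⟩; simp at he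
    · rintro rfl; exact Relation.ReflTransGen.refl
  unfold nClasses
  rw [show classQ ends π (∅ : Finset E) = fun q => ({q} : Finset Q) from funext h]
  rw [Finset.card_image_of_injective _ (fun a b hab => Finset.singleton_injective hab)]
  simp

lemma RQ_insert_split (e : E) {x y : Q} (h : RQ ends π (insert e C) x y) :
    RQ ends π C x y ∨
      ((RQ ends π C x (π (ends e).1) ∨ RQ ends π C x (π (ends e).2)) ∧
       (RQ ends π C y (π (ends e).1) ∨ RQ ends π C y (π (ends e).2))) := by
  set a := π (ends e).1 with ha
  set b := π (ends e).2 with hb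
  induction h with
  | refl => exact Or.inl Relation.ReflTransGen.refl
  | @tail y z hxy hyz ih =>
    rcases hyz with ⟨e', he', hor⟩
    rcases Finset.mem_insert.mp he' with rfl | he'C
    · -- the step uses edge e
      rcases ih with hC | ⟨hx, _⟩
      · rcases hor with ⟨h1, h2⟩ | ⟨h1, h2⟩
        · exact Or.inr ⟨Or.inl (hC.trans (h1 ▸ Relation.ReflTransGen.refl)),
            Or.inr (h2 ▸ Relation.ReflTransGen.refl)⟩
        · exact Or.inr ⟨Or.inr (hC.trans (h2 ▸ Relation.ReflTransGen.refl)),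
            Or.inl (h1 ▸ Relation.ReflTransGen.refl)⟩
      · rcases hor with ⟨h1, h2⟩ | ⟨h1, h2⟩
        · exact Or.inr ⟨hx, Or.inr (h2 ▸ Relation.ReflTransGen.refl)⟩
        · exact Or.inr ⟨hx, Or.inl (h1 ▸ Relation.ReflTransGen.refl)⟩
    · -- step within C
      have hstep : stepQ ends π C y z := ⟨e', he'C, hor⟩
      rcases ih with hC | ⟨hx, hy⟩
      · exact Or.inl (hC.tail hstep)
      · refine Or.inr ⟨hx, ?_⟩
        have hzy : RQ ends π C z y := Relation.ReflTransGen.single ⟨e', he'C, hor.symm⟩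
        rcases hy with hy | hy
        · exact Or.inl (hzy.trans hy)
        · exact Or.inr (hzy.trans hy)

lemma nClasses_insert_ge (e : E) :
    nClasses ends π C ≤ nClasses ends π (insert e C) + 1 := by
  classical
  set a := π (ends e).1 with ha
  set b := π (ends e).2 with hb
  set D : Q → Prop := fun q => RQ ends π C q a ∨ RQ ends π C q b with hD
  set s : Finset Q := Finset.univ.filter (fun q => ¬ D q) with hs
  set C' := insert e C with hC'
  -- on s, C'-classes determine C-classes
  have hkey : ∀ q ∈ s, ∀ q' ∈ s, classQ ends π C' q = classQ ends π C' q' →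
      classQ ends π C q = classQ ends π C q' := by
    intro q hq q' hq' h
    rw [classQ_eq_iff] at h ⊢
    rcases RQ_insert_split ends π C e h with h | ⟨hx, _⟩
    · exact h
    · exact absurd hx (by simpa [hs, hD] using hq)
  have h1 : (s.image (classQ ends π C)).card ≤ (s.image (classQ ends π C')).card := by
    set φ : Finset Q → Finset Q := fun t =>
      if h : ∃ q ∈ s, classQ ends π C' q = t then classQ ends π C h.choose else ∅ with hφ
    apply Finset.card_le_card_of_surjOn φ
    intro t ht
    simp only [Finset.coe_image, Set.mem_image, Finset.mem_coe] at ht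
    obtain ⟨q, hq, rfl⟩ := ht
    refine ⟨classQ ends π C' q, ?_, ?_⟩
    · simp only [Finset.coe_image, Set.mem_image, Finset.mem_coe]
      exact ⟨q, hq, rfl⟩
    · have hex : ∃ q' ∈ s, classQ ends π C' q' = classQ ends π C' q := ⟨q, hq, rfl⟩
      rw [hφ]
      simp only [dif_pos hex]
      obtain ⟨hq's, hq'eq⟩ := hex.choose_spec
      exact hkey _ hq's _ hq hq'eq
  have h2 : (Finset.univ.image (classQ ends π C)) ⊆
      (s.image (classQ ends π C)) ∪ {classQ ends π C a, classQ ends π C b} := by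
    intro t ht
    simp only [Finset.mem_image, Finset.mem_univ, true_and] at ht
    obtain ⟨q, rfl⟩ := ht
    by_cases hq : D q
    · rcases hq with h | h
      · exact Finset.mem_union_right _ (by simp [classQ_eq_of ends π C h])
      · exact Finset.mem_union_right _ (by simp [classQ_eq_of ends π C h])
    · exact Finset.mem_union_left _ (Finset.mem_image.mpr ⟨q, by simp [hs, hq], rfl⟩)
  have h3 : (s.image (classQ ends π C')).card + 1 ≤ nClasses ends π C' := by
    have hssub : s.image (classQ ends π C') ⊂ Finset.univ.image (classQ ends π C') := by
      rw [Finset.ssubset_iff_of_subset (Finset.image_subset_image (Finset.subset_univ s))]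
      refine ⟨classQ ends π C' a, Finset.mem_image.mpr ⟨a, Finset.mem_univ a, rfl⟩, ?_⟩
      intro hmem
      obtain ⟨q, hq, heq⟩ := Finset.mem_image.mp hmem
      rw [classQ_eq_iff] at heq
      rcases RQ_insert_split ends π C e heq with h | ⟨hx, _⟩
      · exact absurd (Or.inl h) (by simpa [hs, hD] using hq)
      · exact absurd hx (by simpa [hs, hD] using hq)
    exact Finset.card_lt_card hssub
  have h4 : nClasses ends π C ≤ (s.image (classQ ends π C)).card + 2 := by
    calc nClasses ends π C ≤ ((s.image (classQ ends π C)) ∪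
        {classQ ends π C a, classQ ends π C b}).card := Finset.card_le_card h2
      _ ≤ (s.image (classQ ends π C)).card + ({classQ ends π C a, classQ ends π C b} : Finset (Finset Q)).card :=
        Finset.card_union_le _ _
      _ ≤ (s.image (classQ ends π C)).card + 2 := by
        have := Finset.card_insert_le (classQ ends π C a) ({classQ ends π C b} : Finset (Finset Q))
        simp only [Finset.card_singleton] at this
        omega
  omega

lemma card_le_card_add_nClasses (C : Finset E) :
    Fintype.card Q ≤ C.card + nClasses ends π C := by
  classical
  induction C using Finset.induction_on with
  | empty => rw [nClasses_empty]; simp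
  | @insert e C he ih =>
    have := nClasses_insert_ge ends π C e
    have hcard : (insert e C).card = C.card + 1 := Finset.card_insert_of_notMem he
    omega

end Count

lemma conn_cross_card [Fintype E] {Q : Type*} [Fintype Q]
    (ends : E → V × V) (π : V → Q) (hπ : Function.Surjective π) (F : Finset E)
    (hconn : ∀ a b : V, EdgeConn ends (↑F) a b) :
    Fintype.card Q - 1 ≤ (F.filter (fun e => π (ends e).1 ≠ π (ends e).2)).card := by
  classical
  set C := F.filter (fun e => π (ends e).1 ≠ π (ends e).2) with hC
  have hRQ : ∀ a b : V, RQ ends π C (π a) (π b) := by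
    intro a b
    have h := hconn a b
    induction h with
    | refl => exact Relation.ReflTransGen.refl
    | @tail y z _ hyz ih =>
      obtain ⟨e, he, ht⟩ := hyz
      by_cases hpi : π y = π z
      · exact hpi ▸ ih
      · refine ih.tail ⟨e, ?_, ?_⟩
        · rw [hC, Finset.mem_filter]
          refine ⟨Finset.mem_coe.mp he, ?_⟩
          rcases ht with ht | ht
          · rw [ht]; exact hpi
          · rw [ht]; exact fun h => hpi h.symm
        · rcases ht with ht | ht
          · exact Or.inl ⟨by rw [ht], by rw [ht]⟩
          · exact Or.inr ⟨by rw [ht], by rw [ht]⟩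
  have hone : nClasses ends π C ≤ 1 := by
    apply Finset.card_le_one.mpr
    intro t ht t' ht'
    simp only [Finset.mem_image, Finset.mem_univ, true_and] at ht ht'
    obtain ⟨q, rfl⟩ := ht
    obtain ⟨q', rfl⟩ := ht'
    obtain ⟨x, rfl⟩ := hπ q
    obtain ⟨y, rfl⟩ := hπ q'
    exact (classQ_eq_iff ends π C).mpr (hRQ x y)
  have := card_le_card_add_nClasses ends π C
  omega

/-- from `|E(G/P)|` edge-disjoint spanning trees of the `(k−1)`-fold
duplicated graph one gets a fractional packing of value `|E(G/P)|/(k−1)` with all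
relative loads at most 1; consequently (with weak duality)
`max_T pack_val(T) = min_P part_val(P) = Φ`. -/

theorem stmt18 [Fintype V] [Fintype E] (ends : E → V × V) (hG : GConn ends)
    (P : Finset (Finset V)) (hP : IsPartition P) (k : ℕ) (hk : P.card = k) (hk2 : 2 ≤ k)
    (Phi : ℝ) (hopt : partVal ends P = Phi)
    (hPhi : ∀ Q : Finset (Finset V), IsPartition Q → 2 ≤ Q.card → Phi ≤ partVal ends Q)
    (m : ℕ) (hm : m = (crossEdgesP ends P).card)
    (Td : Fin m → Finset (E × Fin (k - 1)))
    (hTd : ∀ j, IsSpanningTree (fun d : E × Fin (k - 1) => ends d.1) (Td j))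
    (hdisj : ∀ i j, i ≠ j → Disjoint (Td i) (Td j)) :
    (∃ S : Fin m → Finset E,
      (∀ j, IsSpanningTree ends (S j)) ∧
      (∀ e : E, ((Finset.univ.filter (fun j => e ∈ S j)).card : ℝ) * (1 / ((k : ℝ) - 1)) ≤ 1) ∧
      (∑ _j : Fin m, (1 : ℝ) / ((k : ℝ) - 1)) = (m : ℝ) / ((k : ℝ) - 1)) ∧
    IsGreatest {x : ℝ | IsFracPackingVal ends x} Phi := by
  classical
  -- basic numeric facts
  have hkR : (2:ℝ) ≤ (k:ℝ) := by exact_mod_cast hk2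
  have hkpos : (0:ℝ) < (k:ℝ) - 1 := by linarith
  have hcast : (((k - 1 : ℕ)) : ℝ) = (k:ℝ) - 1 := by
    have : (1:ℕ) ≤ k := by omega
    push_cast [Nat.cast_sub this]
    ring
  -- the part map
  have hpart := hP.2
  set π : V → {S : Finset V // S ∈ P} := fun v => ⟨(hpart v).choose, (hpart v).choose_spec.1.1⟩ with hπ
  have hmemπ : ∀ v : V, v ∈ (π v).1 := fun v => (hpart v).choose_spec.1.2
  have huniq : ∀ (v : V) (S : Finset V), S ∈ P → v ∈ S → (π v).1 = S := by
    intro v S hS hv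
    exact ((hpart v).choose_spec.2 S ⟨hS, hv⟩).symm
  have hπsurj : Function.Surjective π := by
    rintro ⟨S, hS⟩
    obtain ⟨v, hv⟩ := hP.1 S hS
    exact ⟨v, Subtype.ext (huniq v S hS hv)⟩
  have hcrossiff : ∀ e : E, crossesP ends P e ↔ π (ends e).1 ≠ π (ends e).2 := by
    intro e
    constructor
    · intro hc heq
      exact hc (π (ends e).1).1 (π (ends e).1).2 ⟨hmemπ _, by rw [heq]; exact hmemπ _⟩
    · intro hne S hS ⟨h1, h2⟩
      exact hne (Subtype.ext ((huniq _ S hS h1).trans (huniq _ S hS h2).symm))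
  have hcardQ : Fintype.card {S : Finset V // S ∈ P} = k := by
    rw [show Fintype.card {S : Finset V // S ∈ P} = P.card from Fintype.card_coe P, hk]
  -- the projected trees
  set S : Fin m → Finset E := fun j => (Td j).image Prod.fst with hSdef
  have hSconn : ∀ (j : Fin m) (a b : V), EdgeConn ends (↑(S j)) a b := by
    intro j a b
    refine Relation.ReflTransGen.mono ?_ a b ((hTd j).1 a b)
    rintro x y ⟨d, hd, ht⟩
    exact ⟨d.1, Finset.mem_coe.mpr (Finset.mem_image.mpr ⟨d, Finset.mem_coe.mp hd, rfl⟩), ht⟩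
  have hScard : ∀ j, (S j).card = Fintype.card V - 1 := by
    intro j
    have h1 : (S j).card ≤ Fintype.card V - 1 := by
      calc (S j).card ≤ (Td j).card := Finset.card_image_le
        _ = Fintype.card V - 1 := (hTd j).2
    have h2 : Fintype.card V - 1 ≤ (S j).card := by
      have := conn_cross_card ends (id : V → V) Function.surjective_id (S j) (hSconn j)
      calc Fintype.card V - 1 ≤
          ((S j).filter (fun e => id (ends e).1 ≠ id (ends e).2)).card := by
            simpa using this
        _ ≤ (S j).card := Finset.card_le_card (Finset.filter_subset _ _)
    omega
  have hStree : ∀ j, IsSpanningTree ends (S j) := fun j => ⟨hSconn j, hScard j⟩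
  -- load bound
  have hknz : 0 < k - 1 := by omega
  have hload_nat : ∀ e : E, (Finset.univ.filter (fun j => e ∈ S j)).card ≤ k - 1 := by
    intro e
    set g : Fin m → Fin (k - 1) := fun j =>
      if h : e ∈ S j then ((Finset.mem_image.mp h).choose).2 else ⟨0, hknz⟩ with hg
    have : (Finset.univ.filter (fun j => e ∈ S j)).card ≤
        (Finset.univ : Finset (Fin (k - 1))).card := by
      apply Finset.card_le_card_of_injOn g (fun _ _ => Finset.mem_univ _)
      intro i hi j hj hij
      simp only [Finset.mem_coe, Finset.mem_filter, Finset.mem_univ, true_and] at hi hj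
      by_contra hne
      rw [hg] at hij
      simp only [dif_pos hi, dif_pos hj] at hij
      obtain ⟨hdi, hdi1⟩ := (Finset.mem_image.mp hi).choose_spec
      obtain ⟨hdj, hdj1⟩ := (Finset.mem_image.mp hj).choose_spec
      have heq : (Finset.mem_image.mp hi).choose = (Finset.mem_image.mp hj).choose :=
        Prod.ext (hdi1.trans hdj1.symm) hij
      rw [heq] at hdi
      exact (Finset.disjoint_left.mp (hdisj i j hne)) hdi hdj
    simpa using this
  have hload : ∀ e : E,
      ((Finset.univ.filter (fun j => e ∈ S j)).card : ℝ) * (1 / ((k : ℝ) - 1)) ≤ 1 := by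
    intro e
    have hc : ((Finset.univ.filter (fun j => e ∈ S j)).card : ℝ) ≤ (k:ℝ) - 1 := by
      rw [← hcast]
      exact_mod_cast hload_nat e
    rw [mul_one_div, div_le_one hkpos]
    exact hc
  have hsum : (∑ _j : Fin m, (1 : ℝ) / ((k : ℝ) - 1)) = (m : ℝ) / ((k : ℝ) - 1) := by
    rw [Finset.sum_const, Finset.card_univ, Fintype.card_fin, nsmul_eq_mul, mul_one_div]
  -- value of Phi
  have hPhiVal : Phi = (m : ℝ) / ((k : ℝ) - 1) := by
    rw [← hopt]
    unfold partVal
    rw [← hm, hk]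
  refine ⟨⟨S, hStree, hload, hsum⟩, ?_, ?_⟩
  · -- membership
    refine ⟨m, S, fun _ => 1 / ((k:ℝ) - 1), hStree, fun _ => by positivity, ?_, ?_⟩
    · intro e
      rw [Finset.sum_const, nsmul_eq_mul]
      exact hload e
    · rw [hPhiVal, hsum]
  · -- upper bound (weak duality)
    rintro x ⟨n, T, w, hT, hw, hl, rfl⟩
    set A := crossEdgesP ends P with hA
    have hjc : ∀ j : Fin n, (k - 1 : ℕ) ≤ (A.filter (fun e => e ∈ T j)).card := by
      intro j
      have h := conn_cross_card ends π hπsurj (T j) (hT j).1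
      rw [hcardQ] at h
      refine le_of_le_of_eq h ?_
      congr 1
      ext e
      simp only [Finset.mem_filter, hA, crossEdgesP, Finset.mem_univ, true_and]
      rw [hcrossiff e]
      tauto
    have hmain : ((k:ℝ) - 1) * ∑ j, w j ≤ (A.card : ℝ) := by
      calc ((k:ℝ) - 1) * ∑ j, w j = ∑ j, ((k:ℝ) - 1) * w j := Finset.mul_sum _ _ _
        _ ≤ ∑ j, ((A.filter (fun e => e ∈ T j)).card : ℝ) * w j := by
            apply Finset.sum_le_sum
            intro j _
            apply mul_le_mul_of_nonneg_right _ (hw j)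
            rw [← hcast]
            exact_mod_cast hjc j
        _ = ∑ j, ∑ _e ∈ A.filter (fun e => e ∈ T j), w j := by
            apply Finset.sum_congr rfl
            intro j _
            rw [Finset.sum_const, nsmul_eq_mul]
        _ = ∑ e ∈ A, ∑ j ∈ Finset.univ.filter (fun j => e ∈ T j), w j := by
            apply Finset.sum_comm'
            intro j e
            simp only [Finset.mem_filter, Finset.mem_univ, true_and]
            tauto
        _ ≤ ∑ _e ∈ A, (1:ℝ) := Finset.sum_le_sum (fun e _ => hl e)
        _ = (A.card : ℝ) := by rw [Finset.sum_const, nsmul_eq_mul, mul_one]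
    rw [hPhiVal, hm]
    rw [le_div_iff₀ hkpos]
    calc (∑ j, w j) * ((k:ℝ) - 1) = ((k:ℝ) - 1) * ∑ j, w j := mul_comm _ _
      _ ≤ ((crossEdgesP ends P).card : ℝ) := hmain
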